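/- Let G be a finite simple graph on at least 2 vertices such that every pair of distinct nonadjacent vertices x, y satisfies d(x) + d(y) ≥ 2·ᾱ(G) − 1. Then either G contains a triangle, or G is isomorphic to the balanced complete bipartite graph K_{m,m} for some positive integer m. -/

import Mathlib

namespace SimpleGraph

variable {V : Type*}

/-- `G` has an `(s,t)`-bipartite-hole. -/
def HasBipHole (G : SimpleGraph V) (s t : ℕ) : Prop :=
  ∃ S T : Finset V, Disjoint S T ∧ S.card = s ∧ T.card = t ∧
    ∀ a ∈ S, ∀ b ∈ T, ¬ G.Adj a b

/-- The bipartite-hole-number `ᾱ(G)`. -/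
noncomputable def bipHoleNum (G : SimpleGraph V) : ℕ :=
  sInf {k | 0 < k ∧ ∃ s t : ℕ, 0 < s ∧ 0 < t ∧ s + t = k + 1 ∧ ¬ G.HasBipHole s t}

lemma HasBipHole.symm {G : SimpleGraph V} {s t : ℕ} (h : G.HasBipHole s t) :
    G.HasBipHole t s := by
  obtain ⟨S, T, hd, hS, hT, hno⟩ := h
  exact ⟨T, S, hd.symm, hT, hS, fun b hb a ha hadj => hno a ha b hb hadj.symm⟩

end SimpleGraph

open Finset

/-- Auxiliary: build the isomorphism with `K_{m,m}` from a balanced partition realizing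
complete bipartite adjacency. -/
private lemma iso_aux {V : Type*} [Fintype V] [DecidableEq V] (G : SimpleGraph V) (m : ℕ)
    (A : Finset V) (hA : A.card = m) (hAc : Aᶜ.card = m)
    (hadj : ∀ u v : V, G.Adj u v ↔ ((u ∈ A ∧ v ∉ A) ∨ (u ∉ A ∧ v ∈ A))) :
    Nonempty (G ≃g completeBipartiteGraph (Fin m) (Fin m)) := by
  classical
  have cA : Fintype.card {x : V // x ∈ A} = m := by
    simpa [Fintype.card_coe] using hA
  have cB : Fintype.card {x : V // ¬ x ∈ A} = m := by
    rw [Fintype.card_subtype_compl, cA]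
    have h1 := Finset.card_add_card_compl A
    omega
  have eA : {x : V // x ∈ A} ≃ Fin m := Fintype.equivFinOfCardEq cA
  have eB : {x : V // ¬ x ∈ A} ≃ Fin m := Fintype.equivFinOfCardEq cB
  let e : V ≃ (Fin m ⊕ Fin m) :=
    (Equiv.sumCompl (· ∈ A)).symm.trans (Equiv.sumCongr eA eB)
  refine ⟨⟨e, ?_⟩⟩
  intro u v
  by_cases hu : u ∈ A <;> by_cases hv : v ∈ A <;>
    simp [e, Equiv.sumCompl_symm_apply_of_pos, Equiv.sumCompl_symm_apply_of_neg,
      hu, hv, hadj u v]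

/-- If `G` has at least 2 vertices and every pair of distinct nonadjacent
vertices `x, y` satisfies `d(x) + d(y) ≥ 2ᾱ(G) - 1`, then `G` contains a triangle or `G` is
isomorphic to a balanced complete bipartite graph `K_{m,m}` for some `m ≥ 1`. -/
theorem stmt3 {V : Type*} [Fintype V] [DecidableEq V] (G : SimpleGraph V) [DecidableRel G.Adj]
    (hcard : 2 ≤ Fintype.card V)
    (hdeg : ∀ x y : V, x ≠ y → ¬ G.Adj x y →
      2 * G.bipHoleNum - 1 ≤ G.degree x + G.degree y) :
    (∃ x y z : V, G.Adj x y ∧ G.Adj y z ∧ G.Adj x z) ∨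
      ∃ m : ℕ, 0 < m ∧ Nonempty (G ≃g completeBipartiteGraph (Fin m) (Fin m)) := by
  classical
  by_cases htri : ∃ x y z : V, G.Adj x y ∧ G.Adj y z ∧ G.Adj x z
  · exact Or.inl htri
  push_neg at htri
  right
  set K := {k | 0 < k ∧ ∃ s t : ℕ, 0 < s ∧ 0 < t ∧ s + t = k + 1 ∧ ¬ G.HasBipHole s t} with hK
  have hKne : K.Nonempty := by
    refine ⟨Fintype.card V, by omega, 1, Fintype.card V, one_pos, by omega, by omega, ?_⟩
    rintro ⟨S, T, hd, hS, hT, -⟩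
    have h1 : (S ∪ T).card = S.card + T.card := card_union_of_disjoint hd
    have h2 : (S ∪ T).card ≤ Fintype.card V := card_le_univ _
    omega
  have haK : G.bipHoleNum ∈ K := Nat.sInf_mem hKne
  set a := G.bipHoleNum with ha
  obtain ⟨hapos, s₀, t₀, hs₀, ht₀, hst, hhole⟩ := haK
  have hbelow : ∀ s t : ℕ, 0 < s → 0 < t → s + t ≤ a → G.HasBipHole s t := by
    intro s t hs ht hle
    by_contra h
    have hmem : (s + t - 1) ∈ K := ⟨by omega, s, t, hs, ht, by omega, h⟩
    have h2 := Nat.sInf_le hmem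
    have haeq : a = sInf K := rfl
    rw [← haeq] at h2
    omega
  by_cases ha1 : a = 1
  · -- G is complete
    have hs1 : s₀ = 1 := by omega
    have ht1 : t₀ = 1 := by omega
    subst hs1 ht1
    have hcomp : ∀ u v : V, u ≠ v → G.Adj u v := by
      intro u v huv
      by_contra hne
      exact hhole ⟨{u}, {v}, by simp only [Finset.disjoint_singleton]; exact huv, by simp, by simp, by
        intro p hp q hq
        simp only [mem_singleton] at hp hq
        subst hp; subst hq; exact hne⟩
    by_cases h2 : Fintype.card V = 2
    · obtain ⟨y, z, hyz⟩ := Fintype.exists_pair_of_one_lt_card (α := V) (by omega)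
      refine ⟨1, one_pos, iso_aux G 1 {y} (Finset.card_singleton y) ?_ ?_⟩
      · rw [card_compl, Finset.card_singleton, h2]
      · have huniv : ∀ u : V, u = y ∨ u = z := by
          intro u
          have hsub : ({y, z} : Finset V) ⊆ univ := subset_univ _
          have hc : ({y, z} : Finset V).card = 2 := card_pair hyz
          have : (univ : Finset V) = {y, z} := by
            apply (eq_of_subset_of_card_le hsub (by rw [hc, card_univ, h2])).symm
          have hu : u ∈ ({y, z} : Finset V) := this ▸ mem_univ u
          simpa using hu
        intro u v
        constructor
        · intro h
          have huv : u ≠ v := G.ne_of_adj h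
          rcases huniv u with rfl | rfl <;> rcases huniv v with rfl | rfl
          · exact absurd rfl huv
          · exact Or.inl ⟨mem_singleton_self _, by simpa using hyz.symm⟩
          · exact Or.inr ⟨by simpa using hyz.symm, mem_singleton_self _⟩
          · exact absurd rfl huv
        · rintro (⟨h1, h2⟩ | ⟨h1, h2⟩)
          · simp only [mem_singleton] at h1 h2
            exact hcomp u v (by rintro rfl; exact h2 h1)
          · simp only [mem_singleton] at h1 h2
            exact hcomp u v (by rintro rfl; exact h1 h2)
    · -- card ≥ 3 : a triangle exists, contradiction
      exfalso
      have h3 : 2 < (univ : Finset V).card := by rw [card_univ]; omega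
      obtain ⟨p, q, r, -, -, -, hpq, hpr, hqr⟩ := two_lt_card_iff.mp h3
      exact htri p q r (hcomp p q hpq) (hcomp q r hqr) (hcomp p r hpr)
  · -- main case : a ≥ 2
    have ha2 : 2 ≤ a := by omega
    have hNind : ∀ v : V, ∀ p ∈ G.neighborFinset v, ∀ q ∈ G.neighborFinset v, ¬ G.Adj p q := by
      intro v p hp q hq hpq
      exact htri v p q (G.mem_neighborFinset v p |>.mp hp) hpq
        (G.mem_neighborFinset v q |>.mp hq)
    -- independent sets have size at most a
    have hindep : ∀ I : Finset V, (∀ p ∈ I, ∀ q ∈ I, ¬ G.Adj p q) → I.card ≤ a := by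
      intro I hI
      by_contra hlt
      push_neg at hlt
      obtain ⟨S, hSsub, hScard⟩ := exists_subset_card_eq (show s₀ ≤ I.card by omega)
      obtain ⟨T, hTsub, hTcard⟩ := exists_subset_card_eq
        (show t₀ ≤ (I \ S).card by rw [card_sdiff_of_subset hSsub]; omega)
      refine hhole ⟨S, T, ?_, hScard, hTcard, ?_⟩
      · exact (disjoint_sdiff).mono_right hTsub
      · intro p hp q hq
        exact hI p (hSsub hp) q (sdiff_subset (hTsub hq))
    have hdegub : ∀ v : V, G.degree v ≤ a := by
      intro v
      rw [← G.card_neighborFinset_eq_degree v]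
      exact hindep _ (hNind v)
    -- a vertex of degree a exists
    obtain ⟨S1, T1, hd11, hS1, hT1, hno11⟩ := hbelow 1 1 one_pos one_pos (by omega)
    rw [card_eq_one] at hS1 hT1
    obtain ⟨y, rfl⟩ := hS1
    obtain ⟨z, rfl⟩ := hT1
    have hyz : y ≠ z := by
      rintro rfl; simp at hd11
    have hnadjyz : ¬ G.Adj y z := hno11 y (mem_singleton_self y) z (mem_singleton_self z)
    have hsumyz := hdeg y z hyz hnadjyz
    have hxex : ∃ x : V, G.degree x = a := by
      have h1 := hdegub y
      have h2 := hdegub z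
      rcases (show a ≤ G.degree y ∨ a ≤ G.degree z by omega) with h | h
      · exact ⟨y, le_antisymm h1 h⟩
      · exact ⟨z, le_antisymm h2 h⟩
    obtain ⟨x, hx⟩ := hxex
    set A := G.neighborFinset x with hA
    have hAcard : A.card = a := by rw [hA, G.card_neighborFinset_eq_degree x]; exact hx
    have hAind : ∀ p ∈ A, ∀ q ∈ A, ¬ G.Adj p q := hNind x
    have hxA : x ∉ A := by simp [hA]
    have hn1 : a + 1 ≤ Fintype.card V := by
      have h1 : (insert x A).card = a + 1 := by rw [card_insert_of_notMem hxA, hAcard]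
      have h2 := card_le_univ (insert x A)
      omega
    -- minimum degree ≥ a - 1
    have hdeglb : ∀ v : V, a ≤ G.degree v + 1 := by
      intro v
      by_cases h : ∃ w : V, w ≠ v ∧ ¬ G.Adj v w
      · obtain ⟨w, hw, hnadj⟩ := h
        have := hdeg v w (Ne.symm hw) hnadj
        have := hdegub w
        omega
      · push_neg at h
        have hsub : univ \ {v} ⊆ G.neighborFinset v := by
          intro w hw
          simp only [mem_sdiff, mem_univ, mem_singleton, true_and] at hw
          exact (G.mem_neighborFinset v w).mpr (h w hw)
        have hc := card_le_card hsub
        rw [G.card_neighborFinset_eq_degree v] at hc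
        have : (univ \ {v} : Finset V).card = Fintype.card V - 1 := by
          rw [card_sdiff_of_subset (by simp), card_univ, card_singleton]
        omega
    -- the τ-lemma
    have tau : ∀ I : Finset V, (∀ p ∈ I, ∀ q ∈ I, ¬ G.Adj p q) → I.card = a →
        ∀ v : V, v ∉ I →
          s₀ ≤ (I ∩ G.neighborFinset v).card ∧ t₀ ≤ (I ∩ G.neighborFinset v).card := by
      intro I hI hIc v hv
      have hsplit : (I \ G.neighborFinset v).card + (I ∩ G.neighborFinset v).card = a := by
        rw [card_sdiff_add_card_inter, hIc]
      have key : ∀ u w : ℕ, 0 < u → 0 < w → u + w = a + 1 → ¬ G.HasBipHole u w →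
          (I \ G.neighborFinset v).card < u := by
        intro u w hu hw huw hnh
        by_contra hcon
        push_neg at hcon
        obtain ⟨S, hSsub, hScard⟩ := exists_subset_card_eq hcon
        have hSI : S ⊆ I := hSsub.trans sdiff_subset
        refine hnh ⟨S, insert v (I \ S), ?_, hScard, ?_, ?_⟩
        · rw [disjoint_insert_right]
          exact ⟨fun hvS => hv (hSI hvS), disjoint_sdiff⟩
        · rw [card_insert_of_notMem (fun hmem => hv (sdiff_subset hmem)),
            card_sdiff_of_subset hSI, hIc, hScard]
          omega
        · intro p hp q hq
          rcases mem_insert.mp hq with rfl | hq'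
          · have hpNv : p ∉ G.neighborFinset q := (mem_sdiff.mp (hSsub hp)).2
            intro hadj
            exact hpNv ((G.mem_neighborFinset q p).mpr hadj.symm)
          · exact hI p (hSI hp) q (sdiff_subset hq')
      have k1 := key s₀ t₀ hs₀ ht₀ hst hhole
      have k2 := key t₀ s₀ ht₀ hs₀ (by omega) (fun h => hhole h.symm)
      omega
    -- no edges outside A
    have hBpair : ∀ u v : V, u ∉ A → v ∉ A → ¬ G.Adj u v := by
      intro u v hu hv hadj
      have h1 := (tau A hAind hAcard u hu).1
      have h2 := (tau A hAind hAcard v hv).2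
      have hsub : (A ∩ G.neighborFinset u) ∪ (A ∩ G.neighborFinset v) ⊆ A :=
        union_subset inter_subset_left inter_subset_left
      have hui := card_union_add_card_inter (A ∩ G.neighborFinset u) (A ∩ G.neighborFinset v)
      have hle := card_le_card hsub
      have hpos : 0 < ((A ∩ G.neighborFinset u) ∩ (A ∩ G.neighborFinset v)).card := by omega
      obtain ⟨w, hw⟩ := card_pos.mp hpos
      simp only [mem_inter] at hw
      obtain ⟨⟨-, hwu⟩, -, hwv⟩ := hw
      exact htri u v w hadj ((G.mem_neighborFinset v w).mp hwv) ((G.mem_neighborFinset u w).mp hwu)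
    have hBind : ∀ p ∈ Aᶜ, ∀ q ∈ Aᶜ, ¬ G.Adj p q := by
      intro p hp q hq
      exact hBpair p q (mem_compl.mp hp) (mem_compl.mp hq)
    have hBle : Aᶜ.card ≤ a := hindep _ hBind
    have hcompl : A.card + Aᶜ.card = Fintype.card V := card_add_card_compl A
    -- neighbors of A-vertices lie outside A
    have hNzB : ∀ z ∈ A, G.neighborFinset z ⊆ Aᶜ := by
      intro z hz w hw
      rw [mem_compl]
      intro hwA
      exact hAind z hz w hwA ((G.mem_neighborFinset z w).mp hw)
    have hBge : a ≤ Aᶜ.card := by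
      by_contra hcon
      push_neg at hcon
      obtain ⟨z₁, hz₁, z₂, hz₂, hne⟩ := one_lt_card.mp (show 1 < A.card by omega)
      have hd1 : G.degree z₁ ≤ Aᶜ.card := by
        rw [← G.card_neighborFinset_eq_degree z₁]
        exact card_le_card (hNzB z₁ hz₁)
      have hd2 : G.degree z₂ ≤ Aᶜ.card := by
        rw [← G.card_neighborFinset_eq_degree z₂]
        exact card_le_card (hNzB z₂ hz₂)
      have := hdeg z₁ z₂ hne (hAind z₁ hz₁ z₂ hz₂)
      omega
    have hBcard : Aᶜ.card = a := le_antisymm hBle hBge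
    -- neighbors of vertices outside A lie in A
    have hBdegA : ∀ y : V, y ∉ A → G.neighborFinset y ⊆ A := by
      intro y hy w hw
      by_contra hwA
      exact hBpair y w hy hwA ((G.mem_neighborFinset y w).mp hw)
    -- every vertex outside A has degree a
    have hBdeg : ∀ y : V, y ∉ A → G.degree y = a := by
      intro v hv
      refine le_antisymm (hdegub v) ?_
      by_contra hcon
      push_neg at hcon
      have hNvA : G.neighborFinset v ⊆ A := hBdegA v hv
      have hNvcard : (G.neighborFinset v).card < A.card := by
        rw [G.card_neighborFinset_eq_degree v, hAcard]; omega
      have hdiff : (A \ G.neighborFinset v).Nonempty := by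
        rw [← card_pos, card_sdiff_of_subset hNvA]
        omega
      obtain ⟨p, hp⟩ := hdiff
      rw [mem_sdiff] at hp
      obtain ⟨hpA, hpNv⟩ := hp
      have hpv : p ≠ v := fun h => hv (h ▸ hpA)
      have hpadj : ¬ G.Adj p v := fun h => hpNv ((G.mem_neighborFinset v p).mpr h.symm)
      have hNp : G.neighborFinset p ⊆ Aᶜ \ {v} := by
        intro w hw
        rw [mem_sdiff, mem_singleton]
        refine ⟨hNzB p hpA hw, ?_⟩
        intro hwv
        rw [hwv] at hw
        exact hpadj ((G.mem_neighborFinset p v).mp hw)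
      have hdp : G.degree p ≤ a - 1 := by
        rw [← G.card_neighborFinset_eq_degree p]
        calc (G.neighborFinset p).card ≤ (Aᶜ \ {v}).card := card_le_card hNp
          _ = a - 1 := by
              rw [card_sdiff_of_subset (by simpa using hv), hBcard, card_singleton]
      have := hdeg p v hpv hpadj
      omega
    have hBfull : ∀ y : V, y ∉ A → G.neighborFinset y = A := by
      intro y hy
      apply eq_of_subset_of_card_le (hBdegA y hy)
      rw [G.card_neighborFinset_eq_degree y, hBdeg y hy, hAcard]
    have hAfull : ∀ z ∈ A, G.neighborFinset z = Aᶜ := by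
      intro z hz
      have hsub : Aᶜ ⊆ G.neighborFinset z := by
        intro y hy
        have hyA : y ∉ A := mem_compl.mp hy
        have : z ∈ G.neighborFinset y := (hBfull y hyA) ▸ hz
        exact (G.mem_neighborFinset z y).mpr ((G.mem_neighborFinset y z).mp this).symm
      apply (eq_of_subset_of_card_le hsub ?_).symm
      rw [G.card_neighborFinset_eq_degree z, hBcard]
      exact hdegub z
    have hadjiff : ∀ u v : V, G.Adj u v ↔ ((u ∈ A ∧ v ∉ A) ∨ (u ∉ A ∧ v ∈ A)) := by
      intro u v
      constructor
      · intro h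
        by_cases hu : u ∈ A
        · left
          refine ⟨hu, ?_⟩
          have : v ∈ Aᶜ := (hAfull u hu) ▸ (G.mem_neighborFinset u v).mpr h
          exact mem_compl.mp this
        · right
          refine ⟨hu, ?_⟩
          have : v ∈ G.neighborFinset u := (G.mem_neighborFinset u v).mpr h
          rw [hBfull u hu] at this
          exact this
      · rintro (⟨hu, hv⟩ | ⟨hu, hv⟩)
        · have : u ∈ G.neighborFinset v := (hBfull v hv) ▸ hu
          exact ((G.mem_neighborFinset v u).mp this).symm
        · have : v ∈ G.neighborFinset u := (hBfull u hu) ▸ hv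
          exact (G.mem_neighborFinset u v).mp this
    exact ⟨a, by omega, iso_aux G a A hAcard hBcard hadjiff⟩
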